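/- (DJKM Pell identity) Let β ∈ ℂ with β ≠ ±1, p(t) = (t⁴ − 2βt² + 1)/(β² − 1), a₁ = (t² − 1)/√(2(β−1)) and b₀ = √((β+1)/2). Then a₁² − b₀²·p = t², and consequently the sequences defined by aₙ + bₙ₋₁√p = (a₁ + b₀√p)ⁿ satisfy aₙ² − bₙ₋₁²·p = t^{2n} for all n ≥ 0. -/

import Mathlib

open Polynomial

set_option maxRecDepth 8000 in
set_option maxHeartbeats 1000000 in
/-- DJKM Pell identity: `a₁² − b₀²p = t²` and hence `aₙ² − bₙ₋₁²p = t²ⁿ`. -/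
theorem djkm_pell (β s c : ℂ) (hβ1 : β ≠ 1) (hβ2 : β ≠ -1)
    (hs : s ^ 2 = 2 * (β - 1)) (hc : c ^ 2 = (β + 1) / 2)
    (p : Polynomial ℂ)
    (hp : p = C ((β ^ 2 - 1)⁻¹) * (X ^ 4 - C (2 * β) * X ^ 2 + 1))
    (a b : ℕ → Polynomial ℂ)
    (ha1 : a 1 = C s⁻¹ * (X ^ 2 - 1))
    (hb0 : b 0 = C c)
    (ha0 : a 0 = 1)
    (hdef : ∀ n : ℕ,
      AdjoinRoot.of ((X : Polynomial (Polynomial ℂ)) ^ 2 - C p) (a (n + 1)) +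
        AdjoinRoot.of (X ^ 2 - C p) (b n) * AdjoinRoot.root (X ^ 2 - C p) =
      (AdjoinRoot.of (X ^ 2 - C p) (a 1) +
        AdjoinRoot.of (X ^ 2 - C p) (b 0) * AdjoinRoot.root (X ^ 2 - C p)) ^ (n + 1)) :
    a 1 ^ 2 - b 0 ^ 2 * p = X ^ 2 ∧
      ∀ n : ℕ, a (n + 1) ^ 2 - b n ^ 2 * p = X ^ (2 * (n + 1)) := by
  have hb1 : β - 1 ≠ 0 := sub_ne_zero.mpr hβ1
  have hb2 : β + 1 ≠ 0 := by
    intro h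
    exact hβ2 (by linear_combination h)
  have hβsq : β ^ 2 - 1 ≠ 0 := by
    intro h
    exact mul_ne_zero hb1 hb2 (by linear_combination h)
  have h2b : (2 : ℂ) * (β - 1) ≠ 0 := mul_ne_zero two_ne_zero hb1
  have hs0 : s ≠ 0 := by
    intro h
    rw [h] at hs
    exact h2b (by linear_combination -hs)
  have e1 : s⁻¹ ^ 2 = (2 * (β - 1))⁻¹ := by rw [← hs, inv_pow]
  -- Base identity
  have base : a 1 ^ 2 - b 0 ^ 2 * p = X ^ 2 := by
    rw [ha1, hb0, hp]
    apply Polynomial.funext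
    intro x
    simp only [eval_mul, eval_pow, eval_sub, eval_add, eval_C, eval_X, eval_one]
    rw [hc, mul_pow, e1]
    field_simp
    ring
  refine ⟨base, ?_⟩
  set f : Polynomial (Polynomial ℂ) := X ^ 2 - C p with hf
  have hdeg : f.degree = 2 := by
    simpa [hf] using degree_X_pow_sub_C (n := 2) (by norm_num) p
  have hinj : Function.Injective (AdjoinRoot.of f) :=
    AdjoinRoot.of.injective_of_degree_ne_zero (by rw [hdeg]; norm_num)
  have hr2 : (AdjoinRoot.root f) ^ 2 = AdjoinRoot.of f p := by
    have h := AdjoinRoot.eval₂_root f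
    rw [hf] at h
    simp only [eval₂_sub, eval₂_pow, eval₂_X, eval₂_C] at h
    rw [hf]
    linear_combination h
  have hσ0 : aeval (-(AdjoinRoot.root f)) f = 0 := by
    rw [hf, map_sub, map_pow, aeval_X, aeval_C, AdjoinRoot.algebraMap_eq]
    linear_combination hr2
  set σ := AdjoinRoot.liftAlgHom f (Algebra.ofId _ _) (-(AdjoinRoot.root f)) hσ0 with hσ
  have norm_eq : ∀ u v : Polynomial ℂ,
      (AdjoinRoot.of f u + AdjoinRoot.of f v * AdjoinRoot.root f) *
        (AdjoinRoot.of f u - AdjoinRoot.of f v * AdjoinRoot.root f) =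
      AdjoinRoot.of f (u ^ 2 - v ^ 2 * p) := by
    intro u v
    rw [map_sub, map_mul, map_pow, map_pow, ← hr2]
    ring
  intro n
  have h1 := hdef n
  have h2 : AdjoinRoot.of f (a (n + 1)) - AdjoinRoot.of f (b n) * AdjoinRoot.root f =
      (AdjoinRoot.of f (a 1) - AdjoinRoot.of f (b 0) * AdjoinRoot.root f) ^ (n + 1) := by
    have h := congrArg σ h1
    have hσr : σ (AdjoinRoot.root f) = -(AdjoinRoot.root f) := AdjoinRoot.liftAlgHom_root _ _ _ _
    have hσo : ∀ r, σ (AdjoinRoot.of f r) = AdjoinRoot.of f r := fun r =>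
      AdjoinRoot.liftAlgHom_of _ _ _ _ r
    simp only [map_add, map_mul, map_pow, hσr, hσo] at h
    simpa [mul_neg, ← sub_eq_add_neg] using h
  have h3 := congrArg₂ (· * ·) h1 h2
  simp only [← mul_pow] at h3
  rw [norm_eq, norm_eq, base] at h3
  apply hinj
  rw [← map_pow, ← pow_mul] at h3
  rw [h3]
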